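/- For the ESEP distribution with fixed α, the determinant of the 3×3 Fisher information matrix for (θ,σ,ε) is n³α²·(Γ(1−1/α)Γ(1+1/α)α² − Γ(1−1/α)Γ(1+1/α) − α²)·(−α²Γ(1+1/α) − αΓ(1+1/α) + Γ(1/α)) / (−2 σ⁴ Γ(1/α)³ (1−ε²)²); for α = 2 this specializes to det = 2n³(3π−8)/(σ⁴π(1−ε²)²), which is finite and positive for σ > 0, ε ∈ (−1,1), n > 0. -/

import Mathlib

open Real

/-- The Fisher information matrix of ESEP(θ,σ,ε,α) for (θ,σ,ε), scaled by sample size n. -/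
noncomputable def esepFisher (n α σ ε : ℝ) : Matrix (Fin 3) (Fin 3) ℝ :=
  n • !![α * (α - 1) * Real.Gamma (1 - 1 / α) / (2 * σ ^ 2 * Real.Gamma (1 / α) * (1 - ε ^ 2)), 0,
        α ^ 2 / (Real.sqrt 2 * σ * Real.Gamma (1 / α) * (1 - ε ^ 2));
      0, -1 / σ ^ 2 + α * (α + 1) * Real.Gamma (1 + 1 / α) / (Real.Gamma (1 / α) * σ ^ 2), 0;
      α ^ 2 / (Real.sqrt 2 * σ * Real.Gamma (1 / α) * (1 - ε ^ 2)), 0,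
        α * (α + 1) * Real.Gamma (1 + 1 / α) / (Real.Gamma (1 / α) * (1 - ε ^ 2))]

theorem esep_fisher_det (n α σ ε : ℝ) (hn : 0 < n) (hα : 0 < α) (hσ : 0 < σ)
    (hε : ε ∈ Set.Ioo (-1 : ℝ) 1) :
    Matrix.det (esepFisher n α σ ε) =
      n ^ 3 * α ^ 2 *
          (Real.Gamma (1 - 1 / α) * Real.Gamma (1 + 1 / α) * α ^ 2 -
            Real.Gamma (1 - 1 / α) * Real.Gamma (1 + 1 / α) - α ^ 2) *
          (-α ^ 2 * Real.Gamma (1 + 1 / α) - α * Real.Gamma (1 + 1 / α) + Real.Gamma (1 / α)) /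
        (-2 * σ ^ 4 * Real.Gamma (1 / α) ^ 3 * (1 - ε ^ 2) ^ 2) ∧
    (α = 2 →
      Matrix.det (esepFisher n α σ ε) = 2 * n ^ 3 * (3 * Real.pi - 8) /
          (σ ^ 4 * Real.pi * (1 - ε ^ 2) ^ 2) ∧
      0 < 2 * n ^ 3 * (3 * Real.pi - 8) / (σ ^ 4 * Real.pi * (1 - ε ^ 2) ^ 2)) := by
  obtain ⟨h1, h2⟩ := hε
  have hG : 0 < Real.Gamma (1 / α) := Real.Gamma_pos_of_pos (by positivity)
  have hE : (0:ℝ) < 1 - ε ^ 2 := by nlinarith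
  have hs : Real.sqrt 2 * Real.sqrt 2 = 2 := Real.mul_self_sqrt (by norm_num)
  have hdet : Matrix.det (esepFisher n α σ ε) =
      n ^ 3 * α ^ 2 *
          (Real.Gamma (1 - 1 / α) * Real.Gamma (1 + 1 / α) * α ^ 2 -
            Real.Gamma (1 - 1 / α) * Real.Gamma (1 + 1 / α) - α ^ 2) *
          (-α ^ 2 * Real.Gamma (1 + 1 / α) - α * Real.Gamma (1 + 1 / α) + Real.Gamma (1 / α)) /
        (-2 * σ ^ 4 * Real.Gamma (1 / α) ^ 3 * (1 - ε ^ 2) ^ 2) := by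
    rw [esepFisher, Matrix.det_fin_three]
    simp only [Matrix.smul_apply, Matrix.cons_val', Matrix.cons_val_zero, Matrix.cons_val_one,
      Matrix.head_cons, Matrix.empty_val', Matrix.cons_val_fin_one, Matrix.head_fin_const,
      Matrix.cons_val_two, Matrix.tail_cons, smul_eq_mul, Matrix.of_apply]
    field_simp
    ring_nf
    rw [show Real.sqrt 2 ^ 2 = 2 by rw [sq]; exact hs]
    ring
  refine ⟨hdet, fun h2a => ?_⟩
  subst h2a
  have hpi : (3:ℝ) < Real.pi := Real.pi_gt_three
  have hnum : (0:ℝ) < 3 * Real.pi - 8 := by linarith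
  have hgh : Real.Gamma (1/2 : ℝ) = Real.sqrt Real.pi := Real.Gamma_one_half_eq
  have hg32 : Real.Gamma (3/2 : ℝ) = Real.sqrt Real.pi / 2 := by
    rw [show (3/2 : ℝ) = 1/2 + 1 by norm_num, Real.Gamma_add_one (by norm_num), hgh]
    ring
  have hsp : Real.sqrt Real.pi * Real.sqrt Real.pi = Real.pi :=
    Real.mul_self_sqrt Real.pi_pos.le
  have hsp0 : Real.sqrt Real.pi ≠ 0 := by positivity
  constructor
  · rw [hdet]
    norm_num
    rw [hgh, hg32]
    have hb : -(2 * σ ^ 4 * Real.sqrt Real.pi ^ 3 * (1 - ε ^ 2) ^ 2) ≠ 0 := by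
      have : 0 < 2 * σ ^ 4 * Real.sqrt Real.pi ^ 3 * (1 - ε ^ 2) ^ 2 := by positivity
      exact neg_ne_zero.mpr this.ne'
    rw [div_eq_div_iff hb (by positivity)]
    linear_combination (-32 * n ^ 3 * σ ^ 4 * (1 - ε ^ 2) ^ 2 * Real.sqrt Real.pi) * hsp
  · positivity
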